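/- A rank-1 tensor A = α a^{(1)} ⊗ ⋯ ⊗ a^{(d)} ∈ F^{n_1} ⊗ ⋯ ⊗ F^{n_d} with ‖a^{(k)}‖ = 1 for all k and α > 0 real has norm-balanced absolute condition number κ_A(A) = α^{1/d − 1} and norm-balanced relative condition number κ(A) = d^{-1/2}. That is, for the norm-balanced representative p = vec(α^{1/d} a^{(1)}, …, α^{1/d} a^{(d)}) one has ς_N(T_p) = α^{1−1/d} (with N = Σ+1) and ς_N(T_p)^{-1}·‖A‖/‖p‖ = 1/√d. -/

import Mathlib

open scoped BigOperators
open scoped Matrix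

noncomputable section

namespace TensorCond

variable {𝕜 : Type*} [RCLike 𝕜]
variable {d r : ℕ} {n : Fin d → ℕ}

/-- The space `F^{r(Σ+d)}` of vectorized factor matrices: `r` blocks,
each consisting of `d` factors `a_i^{(k)} ∈ F^{n_k}`. -/
abbrev Vecr (𝕜 : Type*) (d r : ℕ) (n : Fin d → ℕ) : Type _ :=
  Fin r → (k : Fin d) → Fin (n k) → 𝕜

/-- The tensor space `F^{n₁} ⊗ ⋯ ⊗ F^{n_d} ≅ F^Π`. -/
abbrev Tensor (𝕜 : Type*) (d : ℕ) (n : Fin d → ℕ) : Type _ :=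
  ((k : Fin d) → Fin (n k)) → 𝕜

/-- Column index of Terracini's matrix. -/
abbrev ColIdx (d r : ℕ) (n : Fin d → ℕ) : Type _ :=
  Fin r × Σ k : Fin d, Fin (n k)

/-- The tensor computation map `f`. -/
def tmap (p : Vecr 𝕜 d r n) : Tensor 𝕜 d n :=
  fun x => ∑ i, ∏ k, p i k (x k)

/-- Terracini's matrix `T_p`. -/
def terracini (p : Vecr 𝕜 d r n) :
    Matrix ((k : Fin d) → Fin (n k)) (ColIdx d r n) 𝕜 :=
  Matrix.of fun x q =>
    (if x q.2.1 = q.2.2 then (1 : 𝕜) else 0) *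
      ∏ l ∈ Finset.univ.erase q.2.1, p q.1 l (x l)

/-- Flattening of a representative vector. -/
def flat (p : Vecr 𝕜 d r n) : ColIdx d r n → 𝕜 :=
  fun q => p q.1 q.2.1 q.2.2

/-- Flattening as a linear map. -/
def flatLM (𝕜 : Type*) [RCLike 𝕜] (d r : ℕ) (n : Fin d → ℕ) :
    Vecr 𝕜 d r n →ₗ[𝕜] (ColIdx d r n → 𝕜) where
  toFun := flat
  map_add' _ _ := rfl
  map_smul' _ _ := rfl

/-- Euclidean norm of a finitely supported vector. -/
def eunorm {ι : Type*} [Fintype ι] (v : ι → 𝕜) : ℝ :=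
  Real.sqrt (∑ i, ‖v i‖ ^ 2)

/-- Euclidean norm of one block. -/
def bnorm (b : (k : Fin d) → Fin (n k) → 𝕜) : ℝ :=
  Real.sqrt (∑ k, ∑ j, ‖b k j‖ ^ 2)

/-- Euclidean norm on `F^{r(Σ+d)}`. -/
def vnorm (p : Vecr 𝕜 d r n) : ℝ :=
  Real.sqrt (∑ i, ∑ k, ∑ j, ‖p i k j‖ ^ 2)

/-- Euclidean (Frobenius) norm on the tensor space. -/
def tnorm (A : Tensor 𝕜 d n) : ℝ :=
  Real.sqrt (∑ x, ‖A x‖ ^ 2)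

/-- Scaling part of the group `𝒯`. -/
def IsScaling (s : Fin r → Fin d → 𝕜) : Prop :=
  (∀ i k, s i k ≠ 0) ∧ ∀ i, ∏ k, s i k = 1

/-- Action of an element of `𝒯`. -/
def act (π : Equiv.Perm (Fin r)) (s : Fin r → Fin d → 𝕜) (q : Vecr 𝕜 d r n) :
    Vecr 𝕜 d r n :=
  fun i k j => s i k * q (π i) k j

/-- `p ∼ q`. -/
def rel (p q : Vecr 𝕜 d r n) : Prop :=
  ∃ (π : Equiv.Perm (Fin r)) (s : Fin r → Fin d → 𝕜), IsScaling s ∧ p = act π s q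

/-- The distance measure `d(p,q) = inf_{T ∈ 𝒯} ‖p − Tq‖`. -/
def gdist (p q : Vecr 𝕜 d r n) : ℝ :=
  sInf { x | ∃ (π : Equiv.Perm (Fin r)) (s : Fin r → Fin d → 𝕜),
    IsScaling s ∧ x = vnorm (p - act π s q) }

/-- Tensors of rank at most `r`. -/
def SecZ (𝕜 : Type*) [RCLike 𝕜] (d r : ℕ) (n : Fin d → ℕ) : Set (Tensor 𝕜 d n) :=
  Set.range (tmap (𝕜 := 𝕜) (d := d) (r := r) (n := n))

/-- `r`-identifiability. -/
def Identifiable {𝕜 : Type*} [RCLike 𝕜] {d : ℕ} {n : Fin d → ℕ} (r : ℕ)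
    (A : Tensor 𝕜 d n) : Prop :=
  ∀ x y : Vecr 𝕜 d r n, tmap x = A → tmap y = A → rel x y

/-- `d(p, f†(A))`. -/
def fdist (p : Vecr 𝕜 d r n) (A : Tensor 𝕜 d n) : ℝ :=
  sInf { x | ∃ q : Vecr 𝕜 d r n, tmap q = A ∧ x = gdist p q }

/-- Multiset of singular values of a matrix. -/
def singularValues {m l : Type*} [Fintype m] [Fintype l] [DecidableEq l]
    (M : Matrix m l 𝕜) : Multiset ℝ :=
  Multiset.map
    (fun i => Real.sqrt ((Matrix.isHermitian_conjTranspose_mul_self M).eigenvalues i))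
    Finset.univ.val

/-- `j`-th largest singular value (1-indexed). -/
def nthSV {m l : Type*} [Fintype m] [Fintype l] [DecidableEq l]
    (M : Matrix m l 𝕜) (j : ℕ) : ℝ :=
  (((singularValues M).sort (· ≤ ·)).reverse).getD (j - 1) 0

/-- Spectral norm. -/
def specNorm {m l : Type*} [Fintype m] [Fintype l] (M : Matrix m l 𝕜) : ℝ :=
  sSup { x | ∃ v : l → 𝕜, eunorm v = 1 ∧ x = eunorm (M.mulVec v) }

/-- Kernel vector `k_i^{(k)}` (one block). -/
def kvec [NeZero d] (p : Vecr 𝕜 d r n) (i : Fin r) (k : Fin d) :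
    (l : Fin d) → Fin (n l) → 𝕜 :=
  fun l j =>
    if h0 : l = 0 then p i 0 (h0 ▸ j)
    else if hk : l = k then -(p i k (hk ▸ j)) else 0

/-- Kernel basis vector `k_i^{(k)} ⊗ e_i` as a flattened column vector. -/
def kcol [NeZero d] (p : Vecr 𝕜 d r n) (i : Fin r) (k : Fin d) :
    ColIdx d r n → 𝕜 :=
  fun q => if q.1 = i then kvec p i k q.2.1 q.2.2 else 0

/-- `P ⊗ I_{Σ+d}` for a permutation `π`. -/
def permMx (𝕜 : Type*) [RCLike 𝕜] (d r : ℕ) (n : Fin d → ℕ)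
    (π : Equiv.Perm (Fin r)) : Matrix (ColIdx d r n) (ColIdx d r n) 𝕜 :=
  Matrix.of fun x y => if y.1 = π x.1 ∧ x.2 = y.2 then 1 else 0

/-- Block diagonal scaling matrix `diag(D_1, …, D_r)`. -/
def scalMx (s : Fin r → Fin d → 𝕜) : Matrix (ColIdx d r n) (ColIdx d r n) 𝕜 :=
  Matrix.diagonal fun x => s x.1 x.2.1

/-- The set `𝒯 = 𝒫ℬ` of matrices. -/
def Tset (𝕜 : Type*) [RCLike 𝕜] (d r : ℕ) (n : Fin d → ℕ) :
    Set (Matrix (ColIdx d r n) (ColIdx d r n) 𝕜) :=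
  { M | ∃ (π : Equiv.Perm (Fin r)) (s : Fin r → Fin d → 𝕜),
      IsScaling s ∧ M = permMx 𝕜 d r n π * scalMx s }

/-- The `i`-th block `T_i` of Terracini's matrix. -/
def terraciniBlock (p : Vecr 𝕜 d r n) (i : Fin r) :
    Matrix ((k : Fin d) → Fin (n k)) (Σ k : Fin d, Fin (n k)) 𝕜 :=
  Matrix.of fun x q =>
    (if x q.1 = q.2 then (1 : 𝕜) else 0) * ∏ l ∈ Finset.univ.erase q.1, p i l (x l)

/-- Kernel-basis matrix `K = [k^{(2)} ⋯ k^{(d)}]` (single point, r = 1). -/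
def Kmx [NeZero d] (a : (k : Fin d) → Fin (n k) → 𝕜) :
    Matrix (Σ k : Fin d, Fin (n k)) {k : Fin d // k ≠ 0} 𝕜 :=
  Matrix.of fun q j => kvec (fun _ : Fin 1 => a) 0 j.1 q.1 q.2

section AuxCond

variable {𝕜 : Type*} [RCLike 𝕜]
variable {d r : ℕ} {n : Fin d → ℕ}

/-- auxiliary: the stacked factor vector. -/
def v0 (a : (k : Fin d) → Fin (n k) → 𝕜) : ColIdx d 1 n → 𝕜 := fun q => a q.2.1 q.2.2

/-- auxiliary: rank-one matrix `v vᴴ`. -/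
def vMat (a : (k : Fin d) → Fin (n k) → 𝕜) : Matrix (ColIdx d 1 n) (ColIdx d 1 n) 𝕜 :=
  Matrix.of fun q q' => v0 a q * star (v0 a q')

/-- auxiliary: block-diagonal part. -/
def dMat (a : (k : Fin d) → Fin (n k) → 𝕜) : Matrix (ColIdx d 1 n) (ColIdx d 1 n) 𝕜 :=
  Matrix.of fun q q' => if q.2.1 = q'.2.1 then v0 a q * star (v0 a q') else 0

lemma gram_unit_terracini [NeZero d]
    (a : (k : Fin d) → Fin (n k) → 𝕜) (ha : ∀ k, ∑ j, ‖a k j‖ ^ 2 = 1)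
    (p₁ : Vecr 𝕜 d 1 n) (hp₁ : ∀ i k j, p₁ i k j = a k j) :
    (terracini p₁)ᴴ * terracini p₁ = 1 + vMat a - dMat a := by
  ext q q'
  obtain ⟨i, k, j⟩ := q
  obtain ⟨i', k', j'⟩ := q'
  have hTq : ∀ (i : Fin 1) (k : Fin d) (j : Fin (n k)) (x : (l : Fin d) → Fin (n l)),
      terracini p₁ x (i, ⟨k, j⟩)
        = (if x k = j then (1:𝕜) else 0) * ∏ l ∈ Finset.univ.erase k, a l (x l) := by
    intro i k j x
    simp only [terracini, Matrix.of_apply]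
    congr 1
    exact Finset.prod_congr rfl fun l _ => hp₁ i l (x l)
  have hsum : ((terracini p₁)ᴴ * terracini p₁) (i, ⟨k, j⟩) (i', ⟨k', j'⟩)
      = ∑ x : (l : Fin d) → Fin (n l),
          star (terracini p₁ x (i, ⟨k, j⟩)) * terracini p₁ x (i', ⟨k', j'⟩) := by
    simp [Matrix.mul_apply, Matrix.conjTranspose_apply]
  have hnorm : ∀ (l : Fin d), ∑ m, star (a l m) * a l m = (1 : 𝕜) := by
    intro l
    have : ∀ m : Fin (n l), star (a l m) * a l m = ((‖a l m‖ ^ 2 : ℝ) : 𝕜) := by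
      intro m; rw [RCLike.star_def, RCLike.conj_mul]; norm_cast
    rw [Finset.sum_congr rfl fun m _ => this m, ← RCLike.ofReal_sum, ha l,
      RCLike.ofReal_one]
  by_cases hkk : k = k'
  · subst hkk
    -- diagonal block case
    set g : (l : Fin d) → Fin (n l) → 𝕜 :=
      Function.update (fun l m => star (a l m) * a l m) k
        (fun m => (if m = j then (1:𝕜) else 0) * (if m = j' then (1:𝕜) else 0)) with hg
    have claim : ∀ x : (l : Fin d) → Fin (n l),
        star (terracini p₁ x (i, ⟨k, j⟩)) * terracini p₁ x (i', ⟨k, j'⟩)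
          = ∏ l, g l (x l) := by
      intro x
      rw [hTq, hTq]
      rw [← Finset.mul_prod_erase Finset.univ (fun l => g l (x l)) (Finset.mem_univ k)]
      have h1 : ∏ l ∈ Finset.univ.erase k, g l (x l)
          = (∏ l ∈ Finset.univ.erase k, star (a l (x l)))
            * ∏ l ∈ Finset.univ.erase k, a l (x l) := by
        rw [← Finset.prod_mul_distrib]
        refine Finset.prod_congr rfl fun l hl => ?_
        rw [hg, Function.update_of_ne (Finset.ne_of_mem_erase hl)]
      rw [h1, hg, Function.update_self]
      rw [star_mul', star_prod]
      simp only [apply_ite (star : 𝕜 → 𝕜), star_one, star_zero]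
      ring
    rw [hsum, Finset.sum_congr rfl fun x _ => claim x]
    have hswap : ∑ x : (l : Fin d) → Fin (n l), ∏ l, g l (x l)
        = ∏ l, ∑ m, g l m := by
      rw [Finset.prod_univ_sum]
      rw [Fintype.piFinset_univ]
    rw [hswap]
    rw [← Finset.mul_prod_erase Finset.univ (fun l => ∑ m, g l m) (Finset.mem_univ k)]
    have h2 : ∏ l ∈ Finset.univ.erase k, ∑ m, g l m = 1 := by
      apply Finset.prod_eq_one
      intro l hl
      have : ∀ m, g l m = star (a l m) * a l m := by
        intro m; rw [hg, Function.update_of_ne (Finset.ne_of_mem_erase hl)]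
      rw [Finset.sum_congr rfl fun m _ => this m, hnorm]
    have h3 : ∑ m, g k m = if j = j' then (1:𝕜) else 0 := by
      simp only [hg, Function.update_self, ite_mul, one_mul, zero_mul]
      rw [Finset.sum_ite_eq' Finset.univ j (fun m => if m = j' then (1:𝕜) else 0)]
      simp [eq_comm]
    rw [h2, h3, mul_one]
    -- RHS
    have hrhs : (1 + vMat a - dMat a) (i, ⟨k, j⟩) (i', ⟨k, j'⟩)
        = if j = j' then (1:𝕜) else 0 := by
      simp only [Matrix.sub_apply, Matrix.add_apply, vMat, dMat, Matrix.of_apply, if_pos rfl]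
      rw [Matrix.one_apply]
      have : ((i, ⟨k, j⟩) : ColIdx d 1 n) = (i', ⟨k, j'⟩) ↔ j = j' := by
        constructor
        · intro h
          have := congrArg Prod.snd h
          simpa using this
        · intro h; subst h
          exact Prod.ext (Subsingleton.elim _ _) rfl
      rw [if_congr this rfl rfl]
      simp
    rw [hrhs]
  · -- off-diagonal block case
    set g : (l : Fin d) → Fin (n l) → 𝕜 :=
      Function.update (Function.update (fun l m => star (a l m) * a l m) k
        (fun m => (if m = j then (1:𝕜) else 0) * a k m)) k'
        (fun m => star (a k' m) * (if m = j' then (1:𝕜) else 0)) with hg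
    have hkmem : k ∈ Finset.univ.erase k' := Finset.mem_erase.mpr ⟨hkk, Finset.mem_univ k⟩
    have hk'mem : k' ∈ Finset.univ.erase k :=
      Finset.mem_erase.mpr ⟨fun h => hkk h.symm, Finset.mem_univ k'⟩
    have claim : ∀ x : (l : Fin d) → Fin (n l),
        star (terracini p₁ x (i, ⟨k, j⟩)) * terracini p₁ x (i', ⟨k', j'⟩)
          = ∏ l, g l (x l) := by
      intro x
      rw [hTq, hTq]
      have h1 : ∏ l ∈ (Finset.univ.erase k').erase k, g l (x l)
          = (∏ l ∈ (Finset.univ.erase k').erase k, star (a l (x l)))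
            * ∏ l ∈ (Finset.univ.erase k').erase k, a l (x l) := by
        rw [← Finset.prod_mul_distrib]
        refine Finset.prod_congr rfl fun l hl => ?_
        have hlk : l ≠ k := Finset.ne_of_mem_erase hl
        have hlk' : l ≠ k' := Finset.ne_of_mem_erase (Finset.mem_of_mem_erase hl)
        rw [hg, Function.update_of_ne hlk', Function.update_of_ne hlk]
      rw [star_mul', star_prod]
      simp only [apply_ite (star : 𝕜 → 𝕜), star_one, star_zero]
      rw [← Finset.mul_prod_erase (Finset.univ.erase k) (fun l => star (a l (x l))) hk'mem,
          ← Finset.mul_prod_erase (Finset.univ.erase k') (fun l => a l (x l)) hkmem]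
      rw [← Finset.mul_prod_erase Finset.univ (fun l => g l (x l)) (Finset.mem_univ k'),
          ← Finset.mul_prod_erase (Finset.univ.erase k') (fun l => g l (x l)) hkmem, h1]
      have e1 : g k' (x k') = star (a k' (x k')) * (if x k' = j' then (1:𝕜) else 0) := by
        rw [hg, Function.update_self]
      have e2 : g k (x k) = (if x k = j then (1:𝕜) else 0) * a k (x k) := by
        rw [hg, Function.update_of_ne hkk, Function.update_self]
      have e3 : (Finset.univ.erase k).erase k' = (Finset.univ.erase k').erase k :=
        Finset.erase_right_comm
      rw [e1, e2, e3]
      ring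
    rw [hsum, Finset.sum_congr rfl fun x _ => claim x]
    have hswap : ∑ x : (l : Fin d) → Fin (n l), ∏ l, g l (x l)
        = ∏ l, ∑ m, g l m := by
      rw [Finset.prod_univ_sum, Fintype.piFinset_univ]
    rw [hswap]
    rw [← Finset.mul_prod_erase Finset.univ (fun l => ∑ m, g l m) (Finset.mem_univ k'),
        ← Finset.mul_prod_erase (Finset.univ.erase k') (fun l => ∑ m, g l m) hkmem]
    have h2 : ∏ l ∈ (Finset.univ.erase k').erase k, ∑ m, g l m = 1 := by
      apply Finset.prod_eq_one
      intro l hl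
      have hlk : l ≠ k := Finset.ne_of_mem_erase hl
      have hlk' : l ≠ k' := Finset.ne_of_mem_erase (Finset.mem_of_mem_erase hl)
      have hbase : ∀ m, g l m = star (a l m) * a l m := fun m => by
        rw [hg, Function.update_of_ne hlk', Function.update_of_ne hlk]
      rw [Finset.sum_congr rfl fun m _ => hbase m, hnorm]
    have h3 : ∑ m, g k' m = star (a k' j') := by
      have hh : ∀ m, g k' m = star (a k' m) * (if m = j' then (1:𝕜) else 0) := fun m => by
        rw [hg, Function.update_self]
      rw [Finset.sum_congr rfl fun m _ => hh m]
      simp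
    have h4 : ∑ m, g k m = a k j := by
      have hh : ∀ m, g k m = (if m = j then (1:𝕜) else 0) * a k m := fun m => by
        rw [hg, Function.update_of_ne hkk, Function.update_self]
      rw [Finset.sum_congr rfl fun m _ => hh m]
      simp
    rw [h2, h3, h4, mul_one]
    have hne : ((i, ⟨k, j⟩) : ColIdx d 1 n) ≠ (i', ⟨k', j'⟩) := by
      intro h; exact hkk (congrArg (fun z : ColIdx d 1 n => z.2.1) h)
    have hrhs : (1 + vMat a - dMat a) ((i, ⟨k, j⟩) : ColIdx d 1 n) (i', ⟨k', j'⟩)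
        = a k j * star (a k' j') := by
      simp only [Matrix.sub_apply, Matrix.add_apply, vMat, dMat, Matrix.of_apply]
      rw [Matrix.one_apply_ne hne, if_neg hkk]
      simp [v0]
    rw [hrhs]
    ring
lemma colIdx_sum {M : Type*} [AddCommMonoid M] (f : ColIdx d 1 n → M) :
    ∑ q, f q = ∑ k : Fin d, ∑ j : Fin (n k), f (0, ⟨k, j⟩) := by
  rw [Fintype.sum_prod_type, Fin.sum_univ_one, ← Finset.univ_sigma_univ, Finset.sum_sigma]

lemma colIdx_eq_iff {i i' : Fin 1} {k k' : Fin d} {j : Fin (n k)} {j' : Fin (n k')} :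
    ((i, ⟨k, j⟩) : ColIdx d 1 n) = (i', ⟨k', j'⟩) ↔ ∃ h : k = k', h ▸ j = j' := by
  constructor
  · intro h
    have h2 := congrArg Prod.snd h
    obtain ⟨hk, hj⟩ := Sigma.mk.inj_iff.mp h2
    exact ⟨hk, by subst hk; exact eq_of_heq hj⟩
  · rintro ⟨hk, hj⟩
    subst hk; subst hj
    exact Prod.ext (Subsingleton.elim _ _) rfl

/-- auxiliary: candidate eigenvector matrix. -/
def Wmx (a : (k : Fin d) → Fin (n k) → 𝕜) (B : (k : Fin d) → Fin (n k) → Fin (n k) → 𝕜)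
    (z : (k : Fin d) → Fin (n k)) (C : Fin d → Fin d → 𝕜) :
    Matrix (ColIdx d 1 n) (ColIdx d 1 n) 𝕜 :=
  Matrix.of fun q' q =>
    if q.2.2 = z q.2.1 then C q.2.1 q'.2.1 * a q'.2.1 q'.2.2
    else if h : q'.2.1 = q.2.1 then B q.2.1 q.2.2 (h ▸ q'.2.2) else 0

lemma Wmx_unitary
    (a : (k : Fin d) → Fin (n k) → 𝕜)
    (B : (k : Fin d) → Fin (n k) → Fin (n k) → 𝕜)
    (hB : ∀ k m m', ∑ j, star (B k m j) * B k m' j = (if m = m' then (1:𝕜) else 0))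
    (z : (k : Fin d) → Fin (n k)) (hBz : ∀ k, B k (z k) = a k)
    (C : Fin d → Fin d → 𝕜)
    (hC : ∀ m m', ∑ k, star (C m k) * C m' k = (if m = m' then (1:𝕜) else 0)) :
    (Wmx a B z C)ᴴ * Wmx a B z C = 1 := by
  have ha : ∀ k, ∑ j, star (a k j) * a k j = (1:𝕜) := by
    intro k
    have h := hB k (z k) (z k)
    rw [hBz] at h
    simpa using h
  set W := Wmx a B z C with hW
  ext q q''
  obtain ⟨i, k, j⟩ := q
  obtain ⟨i'', k'', j''⟩ := q''
  rw [Matrix.mul_apply]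
  simp only [Matrix.conjTranspose_apply]
  rw [colIdx_sum (f := fun q' => star (W q' (i, ⟨k, j⟩)) * W q' (i'', ⟨k'', j''⟩))]
  by_cases h1 : j = z k <;> by_cases h2 : j'' = z k''
  · -- Case A: both type-1
    have key : ∀ k', ∑ j' : Fin (n k'),
        star (W (0, ⟨k', j'⟩) (i, ⟨k, j⟩)) * W (0, ⟨k', j'⟩) (i'', ⟨k'', j''⟩)
          = star (C k k') * C k'' k' := by
      intro k'
      have e : ∀ j' : Fin (n k'),
          star (W (0, ⟨k', j'⟩) (i, ⟨k, j⟩)) * W (0, ⟨k', j'⟩) (i'', ⟨k'', j''⟩)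
            = star (C k k') * C k'' k' * (star (a k' j') * a k' j') := by
        intro j'
        simp only [hW, Wmx, Matrix.of_apply, if_pos h1, if_pos h2, star_mul']
        ring
      rw [Finset.sum_congr rfl fun j' _ => e j', ← Finset.mul_sum, ha k', mul_one]
    rw [Finset.sum_congr rfl fun k' _ => key k', hC k k'']
    have hiff : ((i, ⟨k, j⟩) : ColIdx d 1 n) = (i'', ⟨k'', j''⟩) ↔ k = k'' := by
      rw [colIdx_eq_iff]
      constructor
      · rintro ⟨hk, -⟩; exact hk
      · intro hk; exact ⟨hk, by subst hk; rw [h1, h2]⟩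
    rw [Matrix.one_apply, if_congr hiff rfl rfl]
  · -- Case B
    have hne : ((i, ⟨k, j⟩) : ColIdx d 1 n) ≠ (i'', ⟨k'', j''⟩) := by
      intro hcon
      rw [colIdx_eq_iff] at hcon
      obtain ⟨hk, hj⟩ := hcon
      subst hk; subst hj
      exact h2 h1
    rw [Matrix.one_apply_ne hne]
    apply Finset.sum_eq_zero
    intro k' _
    by_cases hk : k' = k''
    · subst hk
      have e : ∀ j' : Fin (n k'),
          star (W (0, ⟨k', j'⟩) (i, ⟨k, j⟩)) * W (0, ⟨k', j'⟩) (i'', ⟨k', j''⟩)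
            = star (C k k') * (star (a k' j') * B k' j'' j') := by
        intro j'
        simp only [hW, Wmx, Matrix.of_apply, if_pos h1, if_neg h2, dif_pos rfl, dite_true, star_mul']
        ring
      rw [Finset.sum_congr rfl fun j' _ => e j', ← Finset.mul_sum]
      have hz : ∑ j' : Fin (n k'), star (a k' j') * B k' j'' j' = 0 := by
        have h := hB k' (z k') j''
        rw [hBz] at h
        rw [h, if_neg (fun hzz => h2 hzz.symm)]
      rw [hz, mul_zero]
    · apply Finset.sum_eq_zero
      intro j' _
      simp only [hW, Wmx, Matrix.of_apply, if_pos h1, if_neg h2, dif_neg hk, mul_zero]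
  · -- Case C
    have hne : ((i, ⟨k, j⟩) : ColIdx d 1 n) ≠ (i'', ⟨k'', j''⟩) := by
      intro hcon
      rw [colIdx_eq_iff] at hcon
      obtain ⟨hk, hj⟩ := hcon
      subst hk; subst hj
      exact h1 h2
    rw [Matrix.one_apply_ne hne]
    apply Finset.sum_eq_zero
    intro k' _
    by_cases hk : k' = k
    · subst hk
      have e : ∀ j' : Fin (n k'),
          star (W (0, ⟨k', j'⟩) (i, ⟨k', j⟩)) * W (0, ⟨k', j'⟩) (i'', ⟨k'', j''⟩)
            = C k'' k' * (star (B k' j j') * a k' j') := by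
        intro j'
        simp only [hW, Wmx, Matrix.of_apply, if_neg h1, if_pos h2, dif_pos rfl, dite_true, star_mul']
        ring
      rw [Finset.sum_congr rfl fun j' _ => e j', ← Finset.mul_sum]
      have hz : ∑ j' : Fin (n k'), star (B k' j j') * a k' j' = 0 := by
        have h := hB k' j (z k')
        rw [hBz] at h
        rw [h, if_neg (fun hzz => h1 hzz)]
      rw [hz, mul_zero]
    · apply Finset.sum_eq_zero
      intro j' _
      simp only [hW, Wmx, Matrix.of_apply, if_neg h1, if_pos h2, dif_neg hk, star_zero, zero_mul]
  · -- Case D: both type-2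
    by_cases hk : k = k''
    · subst hk
      rw [Finset.sum_eq_single_of_mem k (Finset.mem_univ k)]
      · have e : ∀ j' : Fin (n k),
            star (W (0, ⟨k, j'⟩) (i, ⟨k, j⟩)) * W (0, ⟨k, j'⟩) (i'', ⟨k, j''⟩)
              = star (B k j j') * B k j'' j' := by
          intro j'
          simp only [hW, Wmx, Matrix.of_apply, if_neg h1, if_neg h2, dif_pos rfl, dite_true]
        rw [Finset.sum_congr rfl fun j' _ => e j', hB k j j'']
        have hiff : ((i, ⟨k, j⟩) : ColIdx d 1 n) = (i'', ⟨k, j''⟩) ↔ j = j'' := by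
          rw [colIdx_eq_iff]
          constructor
          · rintro ⟨hk2, hj⟩
            simpa using hj
          · intro hj; exact ⟨rfl, hj⟩
        rw [Matrix.one_apply, if_congr hiff rfl rfl]
      · intro k' _ hk'
        apply Finset.sum_eq_zero
        intro j' _
        simp only [hW, Wmx, Matrix.of_apply, if_neg h1, if_neg h2, dif_neg hk', star_zero,
          zero_mul]
    · have hne : ((i, ⟨k, j⟩) : ColIdx d 1 n) ≠ (i'', ⟨k'', j''⟩) := by
        intro hcon
        rw [colIdx_eq_iff] at hcon
        obtain ⟨hk2, -⟩ := hcon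
        exact hk hk2
      rw [Matrix.one_apply_ne hne]
      apply Finset.sum_eq_zero
      intro k' _
      apply Finset.sum_eq_zero
      intro j' _
      by_cases hk1 : k' = k
      · have hk2 : ¬ (k' = k'') := fun h => hk (hk1.symm.trans h)
        simp only [hW, Wmx, Matrix.of_apply, if_neg h1, if_neg h2, dif_neg hk2, mul_zero]
      · simp only [hW, Wmx, Matrix.of_apply, if_neg h1, if_neg h2, dif_neg hk1, star_zero,
          zero_mul]
lemma oneVD_mul_Wmx [NeZero d]
    (a : (k : Fin d) → Fin (n k) → 𝕜)
    (B : (k : Fin d) → Fin (n k) → Fin (n k) → 𝕜)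
    (hB : ∀ k m m', ∑ j, star (B k m j) * B k m' j = (if m = m' then (1:𝕜) else 0))
    (z : (k : Fin d) → Fin (n k)) (hBz : ∀ k, B k (z k) = a k)
    (C : Fin d → Fin d → 𝕜)
    (hC : ∀ m m', ∑ k, star (C m k) * C m' k = (if m = m' then (1:𝕜) else 0))
    (hC0 : ∀ k', C 0 k' = (((Real.sqrt d)⁻¹ : ℝ) : 𝕜)) :
    (1 + vMat a - dMat a) * Wmx a B z C
      = Wmx a B z C * Matrix.diagonal (fun q : ColIdx d 1 n =>
          if q.2.2 = z q.2.1 then (if q.2.1 = 0 then (d:𝕜) else 0) else 1) := by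
  have ha : ∀ k, ∑ j, star (a k j) * a k j = (1:𝕜) := by
    intro k
    have h := hB k (z k) (z k)
    rw [hBz] at h
    simpa using h
  have hd0 : (0:ℝ) < Real.sqrt d := Real.sqrt_pos.mpr (by
    have := Fintype.card_pos_iff.mpr (inferInstance : Nonempty (Fin d))
    simp only [Fintype.card_fin] at this
    exact_mod_cast Nat.pos_of_ne_zero (NeZero.ne d))
  have hdd : ((Real.sqrt d : ℝ) : 𝕜) * ((Real.sqrt d : ℝ) : 𝕜) = (d : 𝕜) := by
    rw [← RCLike.ofReal_mul, Real.mul_self_sqrt (by positivity)]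
    norm_cast
  set W := Wmx a B z C with hWdef
  rw [Matrix.sub_mul, Matrix.add_mul, Matrix.one_mul]
  ext q' q
  obtain ⟨i', k', j'⟩ := q'
  obtain ⟨i, k, j⟩ := q
  rw [Matrix.sub_apply, Matrix.add_apply, Matrix.mul_diagonal]
  by_cases hq : j = z k
  · -- type-1 column
    have hWval : ∀ (i₂ : Fin 1) (k₂ : Fin d) (j₂ : Fin (n k₂)),
        W (i₂, ⟨k₂, j₂⟩) (i, ⟨k, j⟩) = C k k₂ * a k₂ j₂ := by
      intro i₂ k₂ j₂
      simp only [hWdef, Wmx, Matrix.of_apply, if_pos hq]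
    have hv : (vMat a * W) (i', ⟨k', j'⟩) (i, ⟨k, j⟩)
        = a k' j' * (if (0:Fin d) = k then ((Real.sqrt d : ℝ) : 𝕜) else 0) := by
      rw [Matrix.mul_apply]
      rw [colIdx_sum (f := fun q₂ => vMat a (i', ⟨k', j'⟩) q₂ * W q₂ (i, ⟨k, j⟩))]
      have e : ∀ (k₂ : Fin d) (j₂ : Fin (n k₂)),
          vMat a (i', ⟨k', j'⟩) (0, ⟨k₂, j₂⟩) * W (0, ⟨k₂, j₂⟩) (i, ⟨k, j⟩)
            = a k' j' * (C k k₂ * (star (a k₂ j₂) * a k₂ j₂)) := by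
        intro k₂ j₂
        rw [hWval]
        simp only [vMat, Matrix.of_apply, v0]
        ring
      rw [Finset.sum_congr rfl fun k₂ _ => Finset.sum_congr rfl fun j₂ _ => e k₂ j₂]
      have hS : ∑ k₂ : Fin d, ∑ j₂ : Fin (n k₂), a k' j' * (C k k₂ * (star (a k₂ j₂) * a k₂ j₂))
          = a k' j' * ∑ k₂ : Fin d, C k k₂ := by
        rw [Finset.mul_sum]
        refine Finset.sum_congr rfl fun k₂ _ => ?_
        rw [← Finset.mul_sum, ← Finset.mul_sum, ha k₂, mul_one]
      rw [hS]
      congr 1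
      -- ∑ k₂, C k k₂ = if 0 = k then √d else 0
      have h0 := hC 0 k
      have hstar : ∀ k₂, star (C 0 k₂) = (((Real.sqrt d)⁻¹ : ℝ) : 𝕜) := by
        intro k₂; rw [hC0, RCLike.star_def, RCLike.conj_ofReal]
      rw [Finset.sum_congr rfl (fun k₂ _ => by rw [hstar k₂]), ← Finset.mul_sum] at h0
      have hsum : ∑ k₂ : Fin d, C k k₂
          = ((Real.sqrt d : ℝ) : 𝕜) * (if (0 : Fin d) = k then 1 else 0) := by
        have h1 : ((Real.sqrt d : ℝ) : 𝕜)
              * ((((Real.sqrt d)⁻¹ : ℝ) : 𝕜) * ∑ k₂ : Fin d, C k k₂)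
            = ((Real.sqrt d : ℝ) : 𝕜) * (if (0 : Fin d) = k then 1 else 0) := by rw [h0]
        rwa [← mul_assoc, ← RCLike.ofReal_mul, mul_inv_cancel₀ (ne_of_gt hd0),
          RCLike.ofReal_one, one_mul] at h1
      rw [hsum]
      by_cases h0k : (0 : Fin d) = k
      · rw [if_pos h0k, if_pos h0k, mul_one]
      · rw [if_neg h0k, if_neg h0k, mul_zero]
    have hdm : (dMat a * W) (i', ⟨k', j'⟩) (i, ⟨k, j⟩) = a k' j' * C k k' := by
      rw [Matrix.mul_apply]
      rw [colIdx_sum (f := fun q₂ => dMat a (i', ⟨k', j'⟩) q₂ * W q₂ (i, ⟨k, j⟩))]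
      rw [Finset.sum_eq_single_of_mem k' (Finset.mem_univ k')]
      · have e : ∀ j₂ : Fin (n k'),
            dMat a (i', ⟨k', j'⟩) (0, ⟨k', j₂⟩) * W (0, ⟨k', j₂⟩) (i, ⟨k, j⟩)
              = a k' j' * C k k' * (star (a k' j₂) * a k' j₂) := by
          intro j₂
          rw [hWval]
          simp only [dMat, Matrix.of_apply, v0, if_pos rfl, if_true]
          ring
        rw [Finset.sum_congr rfl fun j₂ _ => e j₂, ← Finset.mul_sum, ha k', mul_one]
      · intro k₂ _ hk₂
        apply Finset.sum_eq_zero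
        intro j₂ _
        simp only [dMat, Matrix.of_apply, if_neg (fun h => hk₂ (Eq.symm h)), zero_mul]
    rw [hv, hdm, hWval, if_pos hq]
    by_cases h0k : (0 : Fin d) = k
    · rw [if_pos h0k.symm, if_pos h0k]
      have : C k k' = (((Real.sqrt d)⁻¹ : ℝ) : 𝕜) := by rw [← h0k, hC0]
      rw [this]
      have hinv : (((Real.sqrt d)⁻¹ : ℝ) : 𝕜) * (d : 𝕜) = ((Real.sqrt d : ℝ) : 𝕜) := by
        rw [← hdd, RCLike.ofReal_inv]
        exact inv_mul_cancel_left₀ (RCLike.ofReal_ne_zero.mpr (ne_of_gt hd0)) _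
      linear_combination (-(a k' j')) * hinv
    · rw [if_neg h0k, if_neg (fun h => h0k h.symm), mul_zero, mul_zero]
      ring
  · -- type-2 column
    have hWval : ∀ (i₂ : Fin 1) (k₂ : Fin d) (j₂ : Fin (n k₂)),
        W (i₂, ⟨k₂, j₂⟩) (i, ⟨k, j⟩)
          = if h : k₂ = k then B k j (h ▸ j₂) else 0 := by
      intro i₂ k₂ j₂
      simp only [hWdef, Wmx, Matrix.of_apply, if_neg hq]
    have hza : ∑ j₂ : Fin (n k), star (a k j₂) * B k j j₂ = 0 := by
      have h := hB k (z k) j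
      rw [hBz] at h
      rw [h, if_neg (fun hzz => hq (Eq.symm hzz))]
    have hv : (vMat a * W) (i', ⟨k', j'⟩) (i, ⟨k, j⟩) = 0 := by
      rw [Matrix.mul_apply]
      rw [colIdx_sum (f := fun q₂ => vMat a (i', ⟨k', j'⟩) q₂ * W q₂ (i, ⟨k, j⟩))]
      rw [Finset.sum_eq_single_of_mem k (Finset.mem_univ k)]
      · have e : ∀ j₂ : Fin (n k),
            vMat a (i', ⟨k', j'⟩) (0, ⟨k, j₂⟩) * W (0, ⟨k, j₂⟩) (i, ⟨k, j⟩)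
              = a k' j' * (star (a k j₂) * B k j j₂) := by
          intro j₂
          rw [hWval, dif_pos rfl]
          simp only [vMat, Matrix.of_apply, v0]
          ring
        rw [Finset.sum_congr rfl fun j₂ _ => e j₂, ← Finset.mul_sum, hza, mul_zero]
      · intro k₂ _ hk₂
        apply Finset.sum_eq_zero
        intro j₂ _
        rw [hWval, dif_neg hk₂, mul_zero]
    have hdm : (dMat a * W) (i', ⟨k', j'⟩) (i, ⟨k, j⟩) = 0 := by
      rw [Matrix.mul_apply]
      rw [colIdx_sum (f := fun q₂ => dMat a (i', ⟨k', j'⟩) q₂ * W q₂ (i, ⟨k, j⟩))]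
      apply Finset.sum_eq_zero
      intro k₂ _
      by_cases hk₂ : k₂ = k
      · subst hk₂
        by_cases hk' : k' = k₂
        · subst hk'
          have e : ∀ j₂ : Fin (n k'),
              dMat a (i', ⟨k', j'⟩) (0, ⟨k', j₂⟩) * W (0, ⟨k', j₂⟩) (i, ⟨k', j⟩)
                = a k' j' * (star (a k' j₂) * B k' j j₂) := by
            intro j₂
            rw [hWval, dif_pos rfl]
            simp only [dMat, Matrix.of_apply, v0, if_pos rfl, if_true]
            ring
          rw [Finset.sum_congr rfl fun j₂ _ => e j₂, ← Finset.mul_sum, hza, mul_zero]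
        · apply Finset.sum_eq_zero
          intro j₂ _
          simp only [dMat, Matrix.of_apply, if_neg hk', zero_mul]
      · apply Finset.sum_eq_zero
        intro j₂ _
        rw [hWval, dif_neg hk₂, mul_zero]
    rw [hv, hdm, if_neg hq, mul_one]
    ring
lemma terracini_eq_smul [NeZero d]
    (a : (k : Fin d) → Fin (n k) → 𝕜) (c : ℝ) (p p₁ : Vecr 𝕜 d 1 n)
    (hp : ∀ i k j, p i k j = (c : 𝕜) * a k j) (hp₁ : ∀ i k j, p₁ i k j = a k j) :
    terracini p = ((c : 𝕜) ^ (d - 1)) • terracini p₁ := by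
  ext x q
  simp only [terracini, Matrix.of_apply, Matrix.smul_apply, smul_eq_mul]
  have h1 : ∏ l ∈ Finset.univ.erase q.2.1, p q.1 l (x l)
      = ∏ l ∈ Finset.univ.erase q.2.1, ((c : 𝕜) * a l (x l)) :=
    Finset.prod_congr rfl fun l _ => hp q.1 l (x l)
  have h2 : ∏ l ∈ Finset.univ.erase q.2.1, p₁ q.1 l (x l)
      = ∏ l ∈ Finset.univ.erase q.2.1, a l (x l) :=
    Finset.prod_congr rfl fun l _ => hp₁ q.1 l (x l)
  rw [h1, h2, Finset.prod_mul_distrib, Finset.prod_const,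
    Finset.card_erase_of_mem (Finset.mem_univ _), Finset.card_univ, Fintype.card_fin]
  ring

lemma exists_onb_factors
    (a : (k : Fin d) → Fin (n k) → 𝕜) (ha : ∀ k, ∑ j, ‖a k j‖ ^ 2 = 1)
    (z : (k : Fin d) → Fin (n k)) :
    ∃ B : (k : Fin d) → Fin (n k) → Fin (n k) → 𝕜,
      (∀ k m m', ∑ j, star (B k m j) * B k m' j = (if m = m' then (1:𝕜) else 0))
      ∧ ∀ k, B k (z k) = a k := by
  have key : ∀ (N : ℕ) (v : Fin N → 𝕜) (z0 : Fin N), (∑ j, ‖v j‖ ^ 2 = 1) →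
      ∃ b : Fin N → Fin N → 𝕜,
        (∀ m m', ∑ j, star (b m j) * b m' j = (if m = m' then (1:𝕜) else 0))
        ∧ b z0 = v := by
    intro N v z0 hv
    set w : EuclideanSpace 𝕜 (Fin N) := (WithLp.equiv 2 (Fin N → 𝕜)).symm v with hw
    have hwj : ∀ j, w j = v j := fun j => rfl
    have hfr : Module.finrank 𝕜 (EuclideanSpace 𝕜 (Fin N)) = Fintype.card (Fin N) := by
      simp [finrank_euclideanSpace]
    have hinner : ∀ x y : EuclideanSpace 𝕜 (Fin N), (inner 𝕜 x y : 𝕜) = ∑ j, star (x j) * y j := by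
      intro x y
      rw [PiLp.inner_apply]
      refine Finset.sum_congr rfl fun j _ => ?_
      rw [RCLike.inner_apply, RCLike.star_def]
      exact mul_comm _ _
    have hww : (inner 𝕜 w w : 𝕜) = 1 := by
      rw [hinner]
      have : ∀ j, star (w j) * w j = ((‖v j‖ ^ 2 : ℝ) : 𝕜) := by
        intro j
        rw [hwj, RCLike.star_def, RCLike.conj_mul]
        norm_cast
      rw [Finset.sum_congr rfl fun j _ => this j, ← RCLike.ofReal_sum, hv, RCLike.ofReal_one]
    have hv' : Orthonormal 𝕜 (({z0} : Set (Fin N)).restrict (fun _ => w)) := by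
      rw [orthonormal_iff_ite]
      intro i j
      have hij : i = j := Subsingleton.elim i j
      subst hij
      rw [if_pos rfl]
      exact hww
    obtain ⟨b, hb⟩ := hv'.exists_orthonormalBasis_extension_of_card_eq hfr
    refine ⟨fun m j => b m j, ?_, ?_⟩
    · intro m m'
      have := orthonormal_iff_ite.mp b.orthonormal m m'
      rw [hinner] at this
      exact this
    · funext j
      have hbz : b z0 = w := hb z0 rfl
      show b z0 j = v j
      rw [hbz]
      exact hwj j
  have hch : ∀ k, ∃ b : Fin (n k) → Fin (n k) → 𝕜,
      (∀ m m', ∑ j, star (b m j) * b m' j = (if m = m' then (1:𝕜) else 0))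
      ∧ b (z k) = a k := fun k => key (n k) (a k) (z k) (ha k)
  choose B hB1 hB2 using hch
  exact ⟨B, hB1, hB2⟩

lemma exists_onb_head [NeZero d] :
    ∃ C : Fin d → Fin d → 𝕜,
      (∀ m m', ∑ k, star (C m k) * C m' k = (if m = m' then (1:𝕜) else 0))
      ∧ ∀ k', C 0 k' = (((Real.sqrt d)⁻¹ : ℝ) : 𝕜) := by
  have hdpos : (0:ℝ) < d := by
    have : d ≠ 0 := NeZero.ne d
    positivity
  have hs : ∑ _j : Fin d, ‖((((Real.sqrt d)⁻¹ : ℝ)) : 𝕜)‖ ^ 2 = 1 := by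
    rw [Finset.sum_const, Finset.card_univ, Fintype.card_fin]
    rw [RCLike.norm_ofReal, abs_of_nonneg (by positivity), nsmul_eq_mul]
    rw [inv_pow, Real.sq_sqrt (le_of_lt hdpos)]
    field_simp
  -- reuse the previous construction with N = d
  have key : ∃ b : Fin d → Fin d → 𝕜,
      (∀ m m', ∑ j, star (b m j) * b m' j = (if m = m' then (1:𝕜) else 0))
      ∧ b 0 = fun _ => (((Real.sqrt d)⁻¹ : ℝ) : 𝕜) := by
    obtain ⟨B, hB1, hB2⟩ := exists_onb_factors (𝕜 := 𝕜) (d := 1) (n := fun _ => d)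
      (fun _ => fun _ => (((Real.sqrt d)⁻¹ : ℝ) : 𝕜)) (fun _ => hs) (fun _ => 0)
    exact ⟨B 0, hB1 0, hB2 0⟩
  obtain ⟨b, hb1, hb2⟩ := key
  exact ⟨b, hb1, fun k' => by rw [hb2]⟩

lemma map_mu_split [NeZero d] (z : (k : Fin d) → Fin (n k)) (x y v : ℝ) :
    Multiset.map (fun q : ColIdx d 1 n =>
        if q.2.2 = z q.2.1 then (if q.2.1 = 0 then x else v) else y) Finset.univ.val
      = x ::ₘ (Multiset.replicate (d - 1) v + Multiset.replicate (∑ k, (n k - 1)) y) := by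
  classical
  set f : ColIdx d 1 n → ℝ := fun q =>
    if q.2.2 = z q.2.1 then (if q.2.1 = 0 then x else v) else y with hf
  set P : ColIdx d 1 n → Prop := fun q => q.2.2 = z q.2.1 with hP
  set P0 : ColIdx d 1 n → Prop := fun q => q.2.1 = 0 with hP0
  have hsplit1 := Multiset.filter_add_not P Finset.univ.val
  have hsplit2 := Multiset.filter_add_not P0 (Multiset.filter P Finset.univ.val)
  -- cardinalities
  have hcard_eq : ∀ p : ColIdx d 1 n → Prop, ∀ _ : DecidablePred p,
      Multiset.card (Multiset.filter p Finset.univ.val)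
        = ∑ k : Fin d, ∑ j : Fin (n k), (if p (0, ⟨k, j⟩) then 1 else 0) := by
    intro p hp
    have h1 : Multiset.card (Multiset.filter p Finset.univ.val)
        = (Finset.univ.filter p).card := by
      rw [Finset.card_def, Finset.filter_val]
    rw [h1, Finset.card_filter]
    exact colIdx_sum (f := fun q => if p q then 1 else 0)
  have hc1 : Multiset.card (Multiset.filter (fun q => P0 q ∧ P q) Finset.univ.val) = 1 := by
    rw [hcard_eq _ inferInstance]
    have e : ∀ k : Fin d, (∑ j : Fin (n k), if (P0 ((0:Fin 1), ⟨k, j⟩) ∧ P (0, ⟨k, j⟩)) then 1 else 0)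
        = if k = 0 then 1 else 0 := by
      intro k
      by_cases hk : k = 0
      · rw [if_pos hk]
        simp only [hP0, hP, hk, if_pos rfl, true_and]
        simp
      · rw [if_neg hk]
        apply Finset.sum_eq_zero
        intro j _
        simp only [hP0, hP]
        rw [if_neg (fun h => hk h.1)]
    rw [Finset.sum_congr rfl fun k _ => e k]
    simp
  have hc2 : Multiset.card (Multiset.filter (fun q => ¬ P0 q ∧ P q) Finset.univ.val) = d - 1 := by
    rw [hcard_eq _ inferInstance]
    have e : ∀ k : Fin d, (∑ j : Fin (n k), if (¬ P0 ((0:Fin 1), ⟨k, j⟩) ∧ P (0, ⟨k, j⟩)) then 1 else 0)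
        = if k = 0 then 0 else 1 := by
      intro k
      by_cases hk : k = 0
      · rw [if_pos hk]
        apply Finset.sum_eq_zero
        intro j _
        simp only [hP0, hP]
        rw [if_neg (fun h => h.1 hk)]
      · rw [if_neg hk]
        simp only [hP0, hP]
        simp [hk]
    rw [Finset.sum_congr rfl fun k _ => e k]
    have : ∀ k : Fin d, (if k = 0 then (0:ℕ) else 1) = if ¬ (k = 0) then 1 else 0 := by
      intro k; by_cases hk : k = 0 <;> simp [hk]
    rw [Finset.sum_congr rfl fun k _ => this k, ← Finset.card_filter]
    rw [show (Finset.univ.filter fun k : Fin d => ¬ k = 0) = Finset.univ.erase 0 by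
      ext k; simp [Finset.mem_erase, and_comm]]
    rw [Finset.card_erase_of_mem (Finset.mem_univ _), Finset.card_univ, Fintype.card_fin]
  have hc3 : Multiset.card (Multiset.filter (fun q => ¬ P q) Finset.univ.val)
      = ∑ k, (n k - 1) := by
    rw [hcard_eq _ inferInstance]
    refine Finset.sum_congr rfl fun k _ => ?_
    have : ∀ j : Fin (n k), (if ¬ P ((0:Fin 1), ⟨k, j⟩) then (1:ℕ) else 0)
        = if ¬ (j = z k) then 1 else 0 := fun j => rfl
    rw [Finset.sum_congr rfl fun j _ => this j, ← Finset.card_filter]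
    rw [show (Finset.univ.filter fun j : Fin (n k) => ¬ j = z k) = Finset.univ.erase (z k) by
      ext j; simp [Finset.mem_erase, and_comm]]
    rw [Finset.card_erase_of_mem (Finset.mem_univ _), Finset.card_univ, Fintype.card_fin]
  -- constant values on the pieces
  have hm1 : Multiset.map f (Multiset.filter (fun q => P0 q ∧ P q) Finset.univ.val)
      = Multiset.replicate 1 x := by
    rw [Multiset.map_congr rfl (fun q hq => ?_), Multiset.map_const', hc1]
    obtain ⟨hq0, hqP⟩ := (Multiset.mem_filter.mp hq).2
    simp only [hf]
    rw [if_pos hqP, if_pos hq0]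
  have hm2 : Multiset.map f (Multiset.filter (fun q => ¬ P0 q ∧ P q) Finset.univ.val)
      = Multiset.replicate (d - 1) v := by
    rw [Multiset.map_congr rfl (fun q hq => ?_), Multiset.map_const', hc2]
    obtain ⟨hq0, hqP⟩ := (Multiset.mem_filter.mp hq).2
    simp only [hf]
    rw [if_pos hqP, if_neg hq0]
  have hm3 : Multiset.map f (Multiset.filter (fun q => ¬ P q) Finset.univ.val)
      = Multiset.replicate (∑ k, (n k - 1)) y := by
    rw [Multiset.map_congr rfl (fun q hq => ?_), Multiset.map_const', hc3]
    have hqP := (Multiset.mem_filter.mp hq).2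
    simp only [hf]
    rw [if_neg hqP]
  have hff : Multiset.filter P0 (Multiset.filter P Finset.univ.val)
      = Multiset.filter (fun q => P0 q ∧ P q) Finset.univ.val := Multiset.filter_filter _ _ _
  have hff2 : Multiset.filter (fun q => ¬ P0 q) (Multiset.filter P Finset.univ.val)
      = Multiset.filter (fun q => ¬ P0 q ∧ P q) Finset.univ.val := Multiset.filter_filter _ _ _
  calc Multiset.map f Finset.univ.val
      = Multiset.map f (Multiset.filter P Finset.univ.val)
        + Multiset.map f (Multiset.filter (fun q => ¬ P q) Finset.univ.val) := by
        conv_rhs => rw [← Multiset.map_add, hsplit1]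
    _ = Multiset.map f (Multiset.filter P0 (Multiset.filter P Finset.univ.val))
        + Multiset.map f (Multiset.filter (fun q => ¬ P0 q) (Multiset.filter P Finset.univ.val))
        + Multiset.map f (Multiset.filter (fun q => ¬ P q) Finset.univ.val) := by
        conv_rhs => rw [← Multiset.map_add, hsplit2]
    _ = Multiset.replicate 1 x + Multiset.replicate (d - 1) v
        + Multiset.replicate (∑ k, (n k - 1)) y := by
        rw [hff, hff2, hm1, hm2, hm3]
    _ = _ := by
        rw [Multiset.replicate_one, ← Multiset.singleton_add]
        rw [add_assoc]
open Polynomial in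
lemma charpoly_conj' {ι : Type*} [Fintype ι] [DecidableEq ι]
    (P A Q : Matrix ι ι 𝕜) (hPQ : P * Q = 1) :
    (P * A * Q).charpoly = A.charpoly := by
  classical
  unfold Matrix.charpoly
  have hch : Matrix.charmatrix (P * A * Q)
      = (C : 𝕜 →+* 𝕜[X]).mapMatrix P * Matrix.charmatrix A * (C : 𝕜 →+* 𝕜[X]).mapMatrix Q := by
    unfold Matrix.charmatrix
    rw [Matrix.mul_sub, Matrix.sub_mul]
    congr 1
    · rw [Matrix.scalar_apply]
      conv_rhs => rw [Matrix.mul_assoc, ← Matrix.smul_eq_diagonal_mul, Matrix.mul_smul,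
        ← map_mul, hPQ, map_one]
      ext i j
      simp [Matrix.diagonal_apply, Matrix.one_apply, apply_ite (X * ·)]
    · simp [← map_mul, Matrix.mul_assoc]
  rw [hch, Matrix.det_mul, Matrix.det_mul]
  have hone : ((C : 𝕜 →+* 𝕜[X]).mapMatrix P).det * ((C : 𝕜 →+* 𝕜[X]).mapMatrix Q).det = 1 := by
    rw [← Matrix.det_mul, ← map_mul, hPQ, map_one, Matrix.det_one]
  calc ((C : 𝕜 →+* 𝕜[X]).mapMatrix P).det * (Matrix.charmatrix A).det
      * ((C : 𝕜 →+* 𝕜[X]).mapMatrix Q).det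
      = (((C : 𝕜 →+* 𝕜[X]).mapMatrix P).det * ((C : 𝕜 →+* 𝕜[X]).mapMatrix Q).det)
        * (Matrix.charmatrix A).det := by ring
    _ = (Matrix.charmatrix A).det := by rw [hone, one_mul]

open Polynomial in
lemma charpoly_diagonal' {ι : Type*} [Fintype ι] [DecidableEq ι]
    (v : ι → 𝕜) : (Matrix.diagonal v).charpoly = ∏ i, (X - C (v i)) := by
  unfold Matrix.charpoly
  have h : Matrix.charmatrix (Matrix.diagonal v) = Matrix.diagonal fun i => X - C (v i) := by
    ext i j
    by_cases h : i = j
    · subst h; simp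
    · simp [Matrix.charmatrix_apply_ne _ _ _ h, Matrix.diagonal_apply_ne _ h,
        Matrix.diagonal_apply_ne]
  rw [h, Matrix.det_diagonal]

open Polynomial in
lemma eig_multiset_eq {ι : Type*} [Fintype ι] [DecidableEq ι]
    {A : Matrix ι ι 𝕜} (hA : A.IsHermitian) (W : Matrix ι ι 𝕜) (μ : ι → ℝ)
    (hW : Wᴴ * W = 1)
    (hfact : A = W * Matrix.diagonal (fun i => ((μ i : ℝ) : 𝕜)) * Wᴴ) :
    Multiset.map hA.eigenvalues Finset.univ.val = Multiset.map μ Finset.univ.val := by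
  have hW' : W * Wᴴ = 1 := mul_eq_one_comm.mp hW
  have h1 : A.charpoly = ∏ i, (X - C ((hA.eigenvalues i : ℝ) : 𝕜)) := by
    have hU := (Matrix.mem_unitaryGroup_iff).mp (hA.eigenvectorUnitary).2
    calc A.charpoly
        = ((hA.eigenvectorUnitary : Matrix ι ι 𝕜)
            * Matrix.diagonal (RCLike.ofReal ∘ hA.eigenvalues)
            * star (hA.eigenvectorUnitary : Matrix ι ι 𝕜)).charpoly := by
          congr 1; exact hA.spectral_theorem
      _ = (Matrix.diagonal (RCLike.ofReal ∘ hA.eigenvalues)).charpoly :=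
          charpoly_conj' _ _ _ hU
      _ = _ := charpoly_diagonal' _
  have h2 : A.charpoly = ∏ i, (X - C ((μ i : ℝ) : 𝕜)) := by
    rw [hfact]
    exact (charpoly_conj' _ _ _ hW').trans (charpoly_diagonal' _)
  have key : ∀ f : ι → ℝ, (∏ i, (X - C ((f i : ℝ) : 𝕜))).roots
      = Multiset.map (fun i => ((f i : ℝ) : 𝕜)) Finset.univ.val := by
    intro f
    have h := Polynomial.roots_multiset_prod_X_sub_C
      (Multiset.map (fun i => ((f i : ℝ) : 𝕜)) Finset.univ.val)
    rw [Multiset.map_map] at h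
    rw [Finset.prod_eq_multiset_prod]
    exact h
  have hr := congrArg Polynomial.roots (h1.symm.trans h2)
  rw [key hA.eigenvalues, key μ] at hr
  have hr' : Multiset.map ((↑) : ℝ → 𝕜) (Multiset.map hA.eigenvalues Finset.univ.val)
      = Multiset.map ((↑) : ℝ → 𝕜) (Multiset.map μ Finset.univ.val) := by
    simpa [Multiset.map_map] using hr
  exact Multiset.map_injective RCLike.ofReal_injective hr'

lemma singularValues_of_factor {m l : Type*} [Fintype m] [Fintype l] [DecidableEq l]
    (M : Matrix m l 𝕜) (W : Matrix l l 𝕜) (μ : l → ℝ) (hW : Wᴴ * W = 1)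
    (hfact : Mᴴ * M = W * Matrix.diagonal (fun i => ((μ i : ℝ) : 𝕜)) * Wᴴ) :
    singularValues M = Multiset.map (fun i => Real.sqrt (μ i)) Finset.univ.val := by
  unfold singularValues
  have h := eig_multiset_eq (Matrix.isHermitian_conjTranspose_mul_self M) W μ hW hfact
  calc Multiset.map (fun i => Real.sqrt
        ((Matrix.isHermitian_conjTranspose_mul_self M).eigenvalues i)) Finset.univ.val
      = Multiset.map Real.sqrt (Multiset.map
          (Matrix.isHermitian_conjTranspose_mul_self M).eigenvalues Finset.univ.val) :=
        (Multiset.map_map Real.sqrt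
          (Matrix.isHermitian_conjTranspose_mul_self M).eigenvalues Finset.univ.val).symm
    _ = Multiset.map Real.sqrt (Multiset.map μ Finset.univ.val) := by rw [h]
    _ = _ := Multiset.map_map Real.sqrt μ Finset.univ.val

lemma sorted_replicate (m : ℕ) (a : ℝ) : List.Pairwise (· ≤ ·) (List.replicate m a) := by
  induction m with
  | zero => simp
  | succ m ih =>
      rw [List.replicate_succ, List.pairwise_cons]
      exact ⟨fun b hb => le_of_eq (List.eq_of_mem_replicate hb).symm, ih⟩

lemma nthSV_from_multiset {m l : Type*} [Fintype m] [Fintype l] [DecidableEq l]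
    (M : Matrix m l 𝕜) (x y : ℝ) (S D : ℕ) (hS : 1 ≤ S) (hy : 0 ≤ y) (hyx : y ≤ x)
    (h : singularValues M = x ::ₘ (Multiset.replicate D 0 + Multiset.replicate S y)) :
    nthSV M (S + 1) = y := by
  unfold nthSV
  rw [h]
  have hsorted : List.Pairwise (· ≤ ·)
      (List.replicate D (0:ℝ) ++ (List.replicate S y ++ [x])) := by
    refine List.pairwise_append.mpr ⟨sorted_replicate _ _, ?_, ?_⟩
    · refine List.pairwise_append.mpr ⟨sorted_replicate _ _, by simp, ?_⟩
      intro u hu w hw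
      rw [List.eq_of_mem_replicate hu]
      rw [List.mem_singleton] at hw
      rw [hw]; exact hyx
    · intro u hu w hw
      rw [List.eq_of_mem_replicate hu]
      rcases List.mem_append.mp hw with hw | hw
      · rw [List.eq_of_mem_replicate hw]; exact hy
      · rw [List.mem_singleton] at hw; rw [hw]; exact le_trans hy hyx
  have hl : Multiset.sort
      (x ::ₘ (Multiset.replicate D (0:ℝ) + Multiset.replicate S y)) (· ≤ ·)
      = List.replicate D 0 ++ (List.replicate S y ++ [x]) := by
    refine List.Perm.eq_of_pairwise' (Multiset.pairwise_sort _ _) hsorted ?_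
    rw [← Multiset.coe_eq_coe, Multiset.sort_eq]
    have hc : ((List.replicate D (0:ℝ) ++ (List.replicate S y ++ [x]) : List ℝ) : Multiset ℝ)
        = Multiset.replicate D 0 + (Multiset.replicate S y + {x}) := by
      rw [← Multiset.coe_add, ← Multiset.coe_add, Multiset.coe_replicate,
        Multiset.coe_replicate, Multiset.coe_singleton]
    rw [hc, ← Multiset.singleton_add]
    rw [add_comm ({x} : Multiset ℝ) (Multiset.replicate D 0 + Multiset.replicate S y), add_assoc]
  rw [hl]
  rw [List.reverse_append, List.reverse_append, List.reverse_replicate,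
    List.reverse_replicate, List.reverse_singleton]
  obtain ⟨S', rfl⟩ : ∃ S', S = S' + 1 := ⟨S - 1, by omega⟩
  have hidx : S' + 1 + 1 - 1 = S' + 1 := by omega
  rw [hidx]
  rw [List.getD_append _ _ _ _ (by simp)]
  rw [List.singleton_append, List.getD_cons_succ]
  rw [List.getD_eq_getElem _ _ (by simp), List.getElem_replicate]

end AuxCond

/-- a rank-1 tensor `A = α a^{(1)} ⊗ ⋯ ⊗ a^{(d)}` with unit-norm factors
and `α > 0` has norm-balanced absolute condition number `α^{1/d−1}` and norm-balanced
relative condition number `d^{-1/2}`. -/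
theorem rank_one_condition_number [NeZero d]
    (hd : 2 ≤ d) (hn : ∀ k, 2 ≤ n k)
    (a : (k : Fin d) → Fin (n k) → 𝕜) (ha : ∀ k, eunorm (a k) = 1)
    (α : ℝ) (hα : 0 < α)
    (p : Vecr 𝕜 d 1 n)
    (hp : ∀ (i : Fin 1) (k : Fin d) (j : Fin (n k)),
      p i k j = ((α ^ ((1 : ℝ) / (d : ℝ)) : ℝ) : 𝕜) * a k j)
    (N : ℕ) (hN : N = (∑ k, (n k - 1)) + 1) :
    nthSV (terracini p) N = α ^ (1 - (1 : ℝ) / (d : ℝ))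
    ∧ (nthSV (terracini p) N)⁻¹ = α ^ ((1 : ℝ) / (d : ℝ) - 1)
    ∧ (nthSV (terracini p) N)⁻¹ * (tnorm (tmap p) / vnorm p) = 1 / Real.sqrt d := by
  subst hN
  have hd1 : 1 ≤ d := le_trans one_le_two hd
  haveI hnz : ∀ k, NeZero (n k) := fun k => ⟨by have := hn k; omega⟩
  have hdR : (0:ℝ) < (d:ℝ) := by exact_mod_cast Nat.lt_of_lt_of_le Nat.zero_lt_two hd
  have hdRne : (d:ℝ) ≠ 0 := ne_of_gt hdR
  set β : ℝ := α ^ ((1:ℝ)/(d:ℝ)) with hβ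
  have hβpos : 0 < β := Real.rpow_pos_of_pos hα _
  have hak : ∀ k, ∑ j, ‖a k j‖ ^ 2 = 1 := by
    intro k
    have h := ha k
    unfold eunorm at h
    exact Real.sqrt_eq_one.mp h
  set z : (k : Fin d) → Fin (n k) := fun k => 0 with hz
  obtain ⟨B, hB1, hB2⟩ := exists_onb_factors a hak z
  obtain ⟨C, hC1, hC2⟩ := exists_onb_head (𝕜 := 𝕜) (d := d)
  set p₁ : Vecr 𝕜 d 1 n := fun _ k j => a k j with hp₁def
  have hp₁ : ∀ (i : Fin 1) (k : Fin d) (j : Fin (n k)), p₁ i k j = a k j := fun _ _ _ => rfl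
  have hT : terracini p = ((β : 𝕜) ^ (d - 1)) • terracini p₁ :=
    terracini_eq_smul a β p p₁ (fun i k j => hp i k j) hp₁
  set b2 : ℝ := (β ^ (d - 1)) ^ 2 with hb2
  have hb2pos : 0 < b2 := by positivity
  have hgram1 : (terracini p₁)ᴴ * terracini p₁ = 1 + vMat a - dMat a :=
    gram_unit_terracini a hak p₁ hp₁
  have hgram : (terracini p)ᴴ * terracini p = ((b2 : ℝ) : 𝕜) • (1 + vMat a - dMat a) := by
    rw [hT, Matrix.conjTranspose_smul, Matrix.smul_mul, Matrix.mul_smul, hgram1, smul_smul]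
    congr 1
    rw [star_pow, RCLike.star_def, RCLike.conj_ofReal, hb2]
    push_cast
    ring
  set W := Wmx a B z C with hWdef
  have hWu : Wᴴ * W = 1 := Wmx_unitary a B hB1 z hB2 C hC1
  have hWW : W * Wᴴ = 1 := mul_eq_one_comm.mp hWu
  set ν : ColIdx d 1 n → 𝕜 := fun q =>
    if q.2.2 = z q.2.1 then (if q.2.1 = 0 then (d:𝕜) else 0) else 1 with hν
  set μ : ColIdx d 1 n → ℝ := fun q =>
    if q.2.2 = z q.2.1 then (if q.2.1 = 0 then (d:ℝ) * b2 else 0) else b2 with hμ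
  have hdiag : ((b2 : ℝ) : 𝕜) • Matrix.diagonal ν
      = Matrix.diagonal (fun q => ((μ q : ℝ) : 𝕜)) := by
    ext q q'
    by_cases hqq : q = q'
    · subst hqq
      simp only [Matrix.smul_apply, Matrix.diagonal_apply_eq, smul_eq_mul, hν, hμ]
      by_cases h1 : q.2.2 = z q.2.1
      · by_cases h2 : q.2.1 = 0
        · rw [if_pos h1, if_pos h2, if_pos h1, if_pos h2]
          push_cast
          ring
        · rw [if_pos h1, if_neg h2, if_pos h1, if_neg h2]
          push_cast
          ring
      · rw [if_neg h1, if_neg h1]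
        push_cast
        ring
    · simp [Matrix.diagonal_apply_ne _ hqq]
  have hfact : (terracini p)ᴴ * terracini p
      = W * Matrix.diagonal (fun q => ((μ q : ℝ) : 𝕜)) * Wᴴ := by
    calc (terracini p)ᴴ * terracini p = ((b2 : ℝ) : 𝕜) • (1 + vMat a - dMat a) := hgram
      _ = ((b2 : ℝ) : 𝕜) • ((1 + vMat a - dMat a) * (W * Wᴴ)) := by rw [hWW, Matrix.mul_one]
      _ = ((b2 : ℝ) : 𝕜) • (((1 + vMat a - dMat a) * W) * Wᴴ) := by rw [Matrix.mul_assoc]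
      _ = ((b2 : ℝ) : 𝕜) • ((W * Matrix.diagonal ν) * Wᴴ) := by
          rw [oneVD_mul_Wmx a B hB1 z hB2 C hC1 hC2]
      _ = (W * (((b2 : ℝ) : 𝕜) • Matrix.diagonal ν)) * Wᴴ := by
          rw [Matrix.mul_smul, Matrix.smul_mul]
      _ = _ := by rw [hdiag]
  have hsv : singularValues (terracini p)
      = Multiset.map (fun q => Real.sqrt (μ q)) Finset.univ.val :=
    singularValues_of_factor _ W μ hWu hfact
  have hmap : Multiset.map (fun q => Real.sqrt (μ q)) Finset.univ.val
      = Real.sqrt ((d:ℝ) * b2) ::ₘ (Multiset.replicate (d - 1) 0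
          + Multiset.replicate (∑ k, (n k - 1)) (β ^ (d - 1))) := by
    have hfn : (fun q : ColIdx d 1 n => Real.sqrt (μ q))
        = fun q => if q.2.2 = z q.2.1
            then (if q.2.1 = 0 then Real.sqrt ((d:ℝ) * b2) else 0) else β ^ (d - 1) := by
      funext q
      simp only [hμ]
      by_cases h1 : q.2.2 = z q.2.1
      · by_cases h2 : q.2.1 = 0
        · rw [if_pos h1, if_pos h2, if_pos h1, if_pos h2]
        · rw [if_pos h1, if_neg h2, if_pos h1, if_neg h2, Real.sqrt_zero]
      · rw [if_neg h1, if_neg h1, hb2, Real.sqrt_sq (by positivity)]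
    rw [hfn, map_mu_split]
  have hS1 : 1 ≤ ∑ k, (n k - 1) := by
    have h : ∑ _k : Fin d, 1 ≤ ∑ k, (n k - 1) :=
      Finset.sum_le_sum fun k _ => by have := hn k; omega
    rw [Finset.sum_const, Finset.card_univ, Fintype.card_fin, smul_eq_mul, mul_one] at h
    omega
  have hyx : β ^ (d - 1) ≤ Real.sqrt ((d:ℝ) * b2) := by
    rw [show β ^ (d - 1) = Real.sqrt b2 from (Real.sqrt_sq (by positivity)).symm]
    apply Real.sqrt_le_sqrt
    nlinarith [hb2pos, hdR, (by exact_mod_cast Nat.one_le_cast.mpr hd1 : (1:ℝ) ≤ (d:ℝ))]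
  have hkey : nthSV (terracini p) ((∑ k, (n k - 1)) + 1) = β ^ (d - 1) :=
    nthSV_from_multiset (terracini p) (Real.sqrt ((d:ℝ) * b2)) (β ^ (d - 1))
      (∑ k, (n k - 1)) (d - 1) hS1 (by positivity) hyx (hsv.trans hmap)
  have hpow : β ^ (d - 1) = α ^ (1 - (1:ℝ)/(d:ℝ)) := by
    rw [hβ, ← Real.rpow_natCast (α ^ ((1:ℝ)/(d:ℝ))) (d - 1), ← Real.rpow_mul (le_of_lt hα)]
    congr 1
    rw [Nat.cast_sub hd1, Nat.cast_one]
    field_simp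
  have hβd : β ^ d = α := by
    rw [hβ, ← Real.rpow_natCast (α ^ ((1:ℝ)/(d:ℝ))) d, ← Real.rpow_mul (le_of_lt hα),
      one_div, inv_mul_cancel₀ hdRne, Real.rpow_one]
  have htmap : ∀ x : (k : Fin d) → Fin (n k), tmap p x = (β : 𝕜) ^ d * ∏ k, a k (x k) := by
    intro x
    unfold tmap
    rw [Fin.sum_univ_one]
    rw [Finset.prod_congr rfl fun k _ => hp 0 k (x k), Finset.prod_mul_distrib,
      Finset.prod_const, Finset.card_univ, Fintype.card_fin]
  have htnorm : tnorm (tmap p) = α := by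
    unfold tnorm
    have h1 : ∀ x : (k : Fin d) → Fin (n k),
        ‖tmap p x‖ ^ 2 = (β ^ d) ^ 2 * ∏ k, ‖a k (x k)‖ ^ 2 := by
      intro x
      rw [htmap x, norm_mul, mul_pow]
      congr 1
      · rw [norm_pow, RCLike.norm_ofReal, abs_of_pos hβpos]
      · rw [norm_prod, ← Finset.prod_pow]
    rw [Finset.sum_congr rfl fun x _ => h1 x, ← Finset.mul_sum]
    have h2 : ∑ x : (k : Fin d) → Fin (n k), ∏ k, ‖a k (x k)‖ ^ 2 = 1 := by
      rw [show (Finset.univ : Finset ((k : Fin d) → Fin (n k)))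
          = Fintype.piFinset (fun _ => Finset.univ) from (Fintype.piFinset_univ).symm]
      rw [← Finset.prod_univ_sum (fun _ : Fin d => (Finset.univ : Finset _)) (fun k j => ‖a k j‖ ^ 2)]
      exact Finset.prod_eq_one fun k _ => hak k
    rw [h2, mul_one, Real.sqrt_sq (by positivity)]
    exact hβd
  have hvnorm : vnorm p = β * Real.sqrt d := by
    unfold vnorm
    rw [Fin.sum_univ_one]
    have h1 : ∀ k : Fin d, ∑ j, ‖p 0 k j‖ ^ 2 = β ^ 2 := by
      intro k
      rw [Finset.sum_congr rfl fun j _ => by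
        rw [hp 0 k j, norm_mul, mul_pow, RCLike.norm_ofReal, abs_of_pos hβpos]]
      rw [← Finset.mul_sum, hak k, mul_one]
    rw [Finset.sum_congr rfl fun k _ => h1 k, Finset.sum_const, Finset.card_univ,
      Fintype.card_fin, nsmul_eq_mul]
    rw [Real.sqrt_mul (le_of_lt hdR) (β ^ 2), Real.sqrt_sq hβpos.le, mul_comm]
  have hsd : (0:ℝ) < Real.sqrt d := Real.sqrt_pos.mpr hdR
  refine ⟨?_, ?_, ?_⟩
  · rw [hkey, hpow]
  · rw [hkey, hpow, ← Real.rpow_neg (le_of_lt hα)]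
    congr 1
    ring
  · rw [hkey, htnorm, hvnorm, ← hβd]
    have hpow2 : β ^ d = β ^ (d - 1) * β := by
      rw [← pow_succ]
      congr 1
      omega
    rw [hpow2]
    have hβne : β ≠ 0 := ne_of_gt hβpos
    have hpne : β ^ (d - 1) ≠ 0 := pow_ne_zero _ hβne
    field_simp

end TensorCond
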